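/- Let t ≥ 3 and t+2 ≤ r ≤ 2t, and let m_i = x_i ⋯ x_{i+t-1} for 1 ≤ i ≤ r−t+1 be the generators of C_t(P_r). Then the Scarf complex of C_t(P_r) consists exactly of the empty set, the singletons {m_i}, and the pairs {m_i, m_{i+1}} of consecutive generators; that is, the Scarf complex is a path on the vertices m_1,…,m_{r−t+1}. -/
import Mathlib


/-- A subset `σ` of the minimal generating set `M` (squarefree monomials identified with their
sets of variables, lcm identified with union) is a face of the Scarf complex when its lcm is
unique among subsets of `M` (with `lcm ∅ = 1`). -/
def ScarfFace {α : Type*} [DecidableEq α] (M σ : Finset (Finset α)) : Prop :=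
  σ ⊆ M ∧ ∀ τ ⊆ M, τ.sup id = σ.sup id → τ = σ

private lemma aux_inj {t i j : ℕ} (ht : 1 ≤ t)
    (h : Finset.Icc i (i + t - 1) = Finset.Icc j (j + t - 1)) : i = j := by
  have hi : i ∈ Finset.Icc j (j + t - 1) := h ▸ Finset.mem_Icc.mpr ⟨le_rfl, by omega⟩
  have hj : j ∈ Finset.Icc i (i + t - 1) := h.symm ▸ Finset.mem_Icc.mpr ⟨le_rfl, by omega⟩
  rw [Finset.mem_Icc] at hi hj
  omega

private lemma aux_icc {a b c d : ℕ} (hab : a ≤ b) (hcd : c ≤ d)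
    (h : Finset.Icc a b = Finset.Icc c d) : a = c ∧ b = d := by
  have h1 : a ∈ Finset.Icc c d := h ▸ Finset.mem_Icc.mpr ⟨le_rfl, hab⟩
  have h3 : c ∈ Finset.Icc a b := h.symm ▸ Finset.mem_Icc.mpr ⟨le_rfl, hcd⟩
  have h2 : b ∈ Finset.Icc c d := h ▸ Finset.mem_Icc.mpr ⟨hab, le_rfl⟩
  have h4 : d ∈ Finset.Icc a b := h.symm ▸ Finset.mem_Icc.mpr ⟨hcd, le_rfl⟩
  rw [Finset.mem_Icc] at h1 h2 h3 h4
  omega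

/-- Key lemma: if all generator indices lie in `[1,n]` with `n ≤ t+1`, the union of the
intervals indexed by `S` is the interval from `min S` to `max S + t - 1`. -/
private lemma aux_sup {t n : ℕ} (ht : 1 ≤ t) (hn : n ≤ t + 1)
    {S : Finset ℕ} (hSn : S ⊆ Finset.Icc 1 n) {a b : ℕ}
    (ha : a ∈ S) (hb : b ∈ S) (hab : ∀ i ∈ S, a ≤ i ∧ i ≤ b) :
    (S.image (fun i => Finset.Icc i (i + t - 1))).sup id = Finset.Icc a (b + t - 1) := by
  have ha1 : 1 ≤ a := (Finset.mem_Icc.mp (hSn ha)).1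
  have hbn : b ≤ n := (Finset.mem_Icc.mp (hSn hb)).2
  ext x
  rw [Finset.sup_image, Finset.mem_sup, Finset.mem_Icc]
  constructor
  · rintro ⟨i, hi, hx⟩
    simp only [Function.comp_apply, id_eq, Finset.mem_Icc] at hx
    have := hab i hi
    omega
  · rintro ⟨h1, h2⟩
    by_cases hc : x ≤ a + t - 1
    · exact ⟨a, ha, by simp only [Function.comp_apply, id_eq, Finset.mem_Icc]; omega⟩
    · exact ⟨b, hb, by simp only [Function.comp_apply, id_eq, Finset.mem_Icc]; omega⟩

/-- For `t ≥ 3` and `t+2 ≤ r ≤ 2t`, the Scarf complex of the `t`-connected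
ideal of the path `P_r`, whose generators are `m_i = x_i ⋯ x_{i+t-1}` for `1 ≤ i ≤ r-t+1`
(identified with the intervals `[i, i+t-1]`), consists exactly of the empty set, the singletons,
and the pairs of consecutive generators: it is a path on `m_1, …, m_{r-t+1}`. -/
theorem scarf_connected_ideal_short_path (t r : ℕ) (ht : 3 ≤ t)
    (hr1 : t + 2 ≤ r) (hr2 : r ≤ 2 * t)
    (M : Finset (Finset ℕ))
    (hM : M = (Finset.Icc 1 (r - t + 1)).image (fun i => Finset.Icc i (i + t - 1)))
    (σ : Finset (Finset ℕ)) (hσ : σ ⊆ M) :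
    ScarfFace M σ ↔
      (σ = ∅ ∨
        (∃ i, 1 ≤ i ∧ i ≤ r - t + 1 ∧ σ = {Finset.Icc i (i + t - 1)}) ∨
        (∃ i, 1 ≤ i ∧ i + 1 ≤ r - t + 1 ∧
          σ = {Finset.Icc i (i + t - 1), Finset.Icc (i + 1) (i + t)})) := by
  subst hM
  set n := r - t + 1 with hn
  have ht1 : 1 ≤ t := by omega
  have hnt : n ≤ t + 1 := by omega
  obtain ⟨S, hSn, rfl⟩ := Finset.subset_image_iff.mp hσ
  constructor
  · rintro ⟨-, huniq⟩
    rcases S.eq_empty_or_nonempty with rfl | hS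
    · left; simp
    · have haS := S.min'_mem hS
      have hbS := S.max'_mem hS
      set a := S.min' hS with hadef
      set b := S.max' hS with hbdef
      have ha1 : 1 ≤ a := (Finset.mem_Icc.mp (hSn haS)).1
      have hbn : b ≤ n := (Finset.mem_Icc.mp (hSn hbS)).2
      have hab : ∀ i ∈ S, a ≤ i ∧ i ≤ b := fun i hi => ⟨S.min'_le i hi, S.le_max' i hi⟩
      have hsupS := aux_sup ht1 hnt hSn haS hbS hab
      have hamb : a ≤ b := S.min'_le _ hbS
      have hba : b ≤ a + 1 := by
        by_contra hba
        push_neg at hba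
        have hsub1 : ({a, b} : Finset ℕ) ⊆ Finset.Icc 1 n := by
          intro j hj
          simp only [Finset.mem_insert, Finset.mem_singleton] at hj
          rw [Finset.mem_Icc]
          rcases hj with rfl | rfl <;> omega
        have hsub2 : ({a, a + 1, b} : Finset ℕ) ⊆ Finset.Icc 1 n := by
          intro j hj
          simp only [Finset.mem_insert, Finset.mem_singleton] at hj
          rw [Finset.mem_Icc]
          rcases hj with rfl | rfl | rfl <;> omega
        have h1 := huniq (({a, b} : Finset ℕ).image (fun i => Finset.Icc i (i + t - 1)))
          (Finset.image_subset_image hsub1)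
          (by
            rw [aux_sup (a := a) (b := b) ht1 hnt hsub1 (by simp) (by simp)
              (by intro j hj; simp only [Finset.mem_insert, Finset.mem_singleton] at hj
                  rcases hj with rfl | rfl <;> omega), hsupS])
        have h2 := huniq (({a, a + 1, b} : Finset ℕ).image (fun i => Finset.Icc i (i + t - 1)))
          (Finset.image_subset_image hsub2)
          (by
            rw [aux_sup (a := a) (b := b) ht1 hnt hsub2 (by simp) (by simp)
              (by intro j hj; simp only [Finset.mem_insert, Finset.mem_singleton] at hj
                  rcases hj with rfl | rfl | rfl <;> omega), hsupS])
        have h12 := h1.trans h2.symm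
        have hmem : Finset.Icc (a + 1) (a + 1 + t - 1) ∈
            (({a, b} : Finset ℕ).image (fun i => Finset.Icc i (i + t - 1))) := by
          rw [h12]
          exact Finset.mem_image_of_mem _ (by simp)
        rw [Finset.mem_image] at hmem
        obtain ⟨c, hc, hceq⟩ := hmem
        have := aux_inj ht1 hceq
        simp only [Finset.mem_insert, Finset.mem_singleton] at hc
        omega
      rcases (by omega : b = a ∨ b = a + 1) with hba' | hba'
      · right; left
        refine ⟨a, ha1, by omega, ?_⟩
        have hSa : S = {a} :=
          Finset.eq_singleton_iff_unique_mem.mpr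
            ⟨haS, fun j hj => by have := hab j hj; omega⟩
        rw [hSa, Finset.image_singleton]
      · right; right
        refine ⟨a, ha1, by omega, ?_⟩
        have hSa : S = {a, a + 1} := by
          apply Finset.Subset.antisymm
          · intro j hj
            have := hab j hj
            simp only [Finset.mem_insert, Finset.mem_singleton]
            omega
          · intro j hj
            simp only [Finset.mem_insert, Finset.mem_singleton] at hj
            rcases hj with rfl | rfl
            · exact haS
            · rw [← hba']; exact hbS
        rw [hSa]
        have harith : a + 1 + t - 1 = a + t := by omega
        simp only [Finset.image_insert, Finset.image_singleton, harith]
  · intro h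
    refine ⟨hσ, ?_⟩
    intro τ hτ hsup
    obtain ⟨T, hTn, rfl⟩ := Finset.subset_image_iff.mp hτ
    rcases h with h | ⟨i, hi1, hi2, h⟩ | ⟨i, hi1, hi2, h⟩
    · -- σ = ∅
      rw [h] at hsup ⊢
      rcases T.eq_empty_or_nonempty with rfl | hT
      · simp
      · exfalso
        have haS := T.min'_mem hT
        have hbS := T.max'_mem hT
        have hab : ∀ j ∈ T, T.min' hT ≤ j ∧ j ≤ T.max' hT :=
          fun j hj => ⟨T.min'_le j hj, T.le_max' j hj⟩
        rw [aux_sup ht1 hnt hTn haS hbS hab] at hsup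
        have hmm : T.min' hT ≤ T.max' hT := T.min'_le _ hbS
        have : T.min' hT ∈ (∅ : Finset (Finset ℕ)).sup id := by
          rw [← hsup, Finset.mem_Icc]; omega
        simp at this
    · -- σ = singleton
      rw [h] at hsup ⊢
      rw [Finset.sup_singleton, id_eq] at hsup
      rcases T.eq_empty_or_nonempty with rfl | hT
      · exfalso
        have hii : i ∈ Finset.Icc i (i + t - 1) := Finset.mem_Icc.mpr ⟨le_rfl, by omega⟩
        rw [← hsup] at hii
        simp at hii
      · have haS := T.min'_mem hT
        have hbS := T.max'_mem hT
        have hab : ∀ j ∈ T, T.min' hT ≤ j ∧ j ≤ T.max' hT :=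
          fun j hj => ⟨T.min'_le j hj, T.le_max' j hj⟩
        rw [aux_sup ht1 hnt hTn haS hbS hab] at hsup
        have hmm : T.min' hT ≤ T.max' hT := T.min'_le _ hbS
        obtain ⟨hac, hbc⟩ := aux_icc (by omega) (by omega) hsup
        have hbi : T.max' hT = i := by omega
        have hTi : T = {i} :=
          Finset.eq_singleton_iff_unique_mem.mpr
            ⟨hac ▸ haS, fun j hj => by have := hab j hj; omega⟩
        rw [hTi, Finset.image_singleton]
    · -- σ = pair
      have harith : i + 1 + t - 1 = i + t := by omega
      have hpair : ({i, i + 1} : Finset ℕ).image (fun j => Finset.Icc j (j + t - 1)) =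
          {Finset.Icc i (i + t - 1), Finset.Icc (i + 1) (i + t)} := by
        simp only [Finset.image_insert, Finset.image_singleton, harith]
      have hsubp : ({i, i + 1} : Finset ℕ) ⊆ Finset.Icc 1 n := by
        intro j hj
        simp only [Finset.mem_insert, Finset.mem_singleton] at hj
        rw [Finset.mem_Icc]
        rcases hj with rfl | rfl <;> omega
      have hsupσ : ({Finset.Icc i (i + t - 1), Finset.Icc (i + 1) (i + t)} :
          Finset (Finset ℕ)).sup id = Finset.Icc i (i + 1 + t - 1) := by
        rw [← hpair]
        exact aux_sup (a := i) (b := i + 1) ht1 hnt hsubp (by simp) (by simp)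
          (by intro j hj; simp only [Finset.mem_insert, Finset.mem_singleton] at hj
              rcases hj with rfl | rfl <;> omega)
      rw [h] at hsup ⊢
      rw [hsupσ] at hsup
      rcases T.eq_empty_or_nonempty with rfl | hT
      · exfalso
        have hii : i ∈ Finset.Icc i (i + 1 + t - 1) := Finset.mem_Icc.mpr ⟨le_rfl, by omega⟩
        rw [← hsup] at hii
        simp at hii
      · have haS := T.min'_mem hT
        have hbS := T.max'_mem hT
        have hab : ∀ j ∈ T, T.min' hT ≤ j ∧ j ≤ T.max' hT :=
          fun j hj => ⟨T.min'_le j hj, T.le_max' j hj⟩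
        rw [aux_sup ht1 hnt hTn haS hbS hab] at hsup
        have hmm : T.min' hT ≤ T.max' hT := T.min'_le _ hbS
        obtain ⟨hac, hbc⟩ := aux_icc (by omega) (by omega) hsup
        have hbi : T.max' hT = i + 1 := by omega
        have hTi : T = {i, i + 1} := by
          apply Finset.Subset.antisymm
          · intro j hj
            have := hab j hj
            simp only [Finset.mem_insert, Finset.mem_singleton]
            omega
          · intro j hj
            simp only [Finset.mem_insert, Finset.mem_singleton] at hj
            rcases hj with rfl | rfl
            · exact hac ▸ haS
            · exact hbi ▸ hbS
        rw [hTi, hpair]
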